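/- Let Γ be a δ-hyperbolic connected graph and let 𝓗 be a factor system for Γ. Then there exists Θ (depending on the factor-system constants; one may take Θ = 2B + ξ + 2) such that for every pair F, W ∈ 𝓗 at least one of the following holds: (i) diam_{F̂}( π_F(W) ) ≤ Θ, or (ii) F ⊆ W. -/

import Mathlib

universe u

open SimpleGraph

/-- The cone-off of a graph `G` with respect to a family `𝓗` of (vertex sets of)
subgraphs: an edge is added between each pair of distinct vertices of each `S ∈ 𝓗`. -/
def coneOff {V : Type u} (G : SimpleGraph V) (𝓗 : Set (Set V)) : SimpleGraph V where
  Adj a b := G.Adj a b ∨ (a ≠ b ∧ ∃ S ∈ 𝓗, a ∈ S ∧ b ∈ S)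
  symm := by
    constructor
    intro a b hab
    rcases hab with h | ⟨hne, S, hS, ha, hb⟩
    · exact Or.inl h.symm
    · exact Or.inr ⟨hne.symm, S, hS, hb, ha⟩
  loopless := by
    constructor
    intro a ha
    rcases ha with h | ⟨hne, -⟩
    · exact G.loopless.irrefl a h
    · exact hne rfl

/-- `δ`-hyperbolicity of a graph via `δ`-slim geodesic triangles
(geodesics being shortest-path walks). -/
def GraphHyperbolic {V : Type u} (G : SimpleGraph V) (δ : ℝ) : Prop :=
  ∀ (x y z : V) (p : G.Walk x y) (q : G.Walk y z) (r : G.Walk x z),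
    p.length = G.dist x y → q.length = G.dist y z → r.length = G.dist x z →
    ∀ v ∈ r.support, ∃ w, (w ∈ p.support ∨ w ∈ q.support) ∧ (G.dist v w : ℝ) ≤ δ

/-- A de-electrification datum: `g` is a `G`-walk obtained from the walk `γ` of the
cone-off by replacing each `𝓗`-component (the edges indexed by `C`) by a `G`-geodesic
between its endpoints; `φ` maps positions along `γ` to positions along `g`. -/
def IsDeelectrification {V : Type u} (G : SimpleGraph V) (𝓗 : Set (Set V)) {x y : V}
    (γ : (coneOff G 𝓗).Walk x y) (g : G.Walk x y) (φ : ℕ → ℕ) (C : Set ℕ) : Prop :=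
  φ 0 = 0 ∧ φ γ.length = g.length ∧
    (∀ i ≤ γ.length, g.getVert (φ i) = γ.getVert i) ∧
    (∀ i < γ.length, i ∈ C →
      (∃ S ∈ 𝓗, γ.getVert i ∈ S ∧ γ.getVert (i + 1) ∈ S) ∧
      φ (i + 1) = φ i + G.dist (γ.getVert i) (γ.getVert (i + 1))) ∧
    (∀ i < γ.length, i ∉ C →
      G.Adj (γ.getVert i) (γ.getVert (i + 1)) ∧ φ (i + 1) = φ i + 1)

/-- The cone-off `Ŵ` of (the subgraph induced on) `W` with respect to the family
`𝓗_W = {U ∈ 𝓗 | U ⊊ W}`, realized as a graph on the ambient vertex set (vertices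
outside `W` are isolated). -/
def hatG {V : Type u} (G : SimpleGraph V) (𝓗 : Set (Set V)) (W : Set V) : SimpleGraph V where
  Adj a b := a ∈ W ∧ b ∈ W ∧
    (G.Adj a b ∨ (a ≠ b ∧ ∃ U ∈ 𝓗, U ⊂ W ∧ a ∈ U ∧ b ∈ U))
  symm := by
    constructor
    intro a b hab
    obtain ⟨ha, hb, h | ⟨hne, U, hU, hUW, haU, hbU⟩⟩ := hab
    · exact ⟨hb, ha, Or.inl h.symm⟩
    · exact ⟨hb, ha, Or.inr ⟨hne.symm, U, hU, hUW, hbU, haU⟩⟩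
  loopless := by
    constructor
    intro a ha
    obtain ⟨-, -, h | ⟨hne, -⟩⟩ := ha
    · exact G.loopless.irrefl a h
    · exact hne rfl

/-- Closest-point projection (in the graph metric of `G`) of the vertex `x` to `W`. -/
def gProjSet {V : Type u} (G : SimpleGraph V) (W : Set V) (x : V) : Set V :=
  {w ∈ W | ∀ w' ∈ W, G.dist x w ≤ G.dist x w'}

/-- Closest-point projection (in the graph metric of `G`) of the set `S` to `W`. -/
def gProjSetOf {V : Type u} (G : SimpleGraph V) (W S : Set V) : Set V :=
  ⋃ s ∈ S, gProjSet G W s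

/-- The Hausdorff distance between `S` and `T` in the graph metric of `G` is at most `d`. -/
def GHausBound {V : Type u} (G : SimpleGraph V) (d : ℝ) (S T : Set V) : Prop :=
  (∀ s ∈ S, ∃ t ∈ T, (G.dist s t : ℝ) ≤ d) ∧
  (∀ t ∈ T, ∃ s ∈ S, (G.dist t s : ℝ) ≤ d)

/-- A factor system `𝓗` for the graph `G`, with constants `K, c, ξ, B`
(Definition 3.1). -/
structure FactorSystem {V : Type u} (G : SimpleGraph V) (𝓗 : Set (Set V))
    (K : ℝ) (c : ℕ) (ξ B : ℝ) : Prop where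
  connected : ∀ W ∈ 𝓗, (G.induce W).Connected
  qie : ∀ (W : Set V), W ∈ 𝓗 → ∀ (u v : V) (hu : u ∈ W) (hv : v ∈ W),
    ((G.induce W).dist ⟨u, hu⟩ ⟨v, hv⟩ : ℝ) ≤ K * (G.dist u v : ℝ) + K
  proj : ∀ W₁ ∈ 𝓗, ∀ W₂ ∈ 𝓗,
    (∀ p ∈ gProjSetOf G W₁ W₂, ∀ q ∈ gProjSetOf G W₁ W₂, (G.dist p q : ℝ) ≤ ξ) ∨
    ∃ U ∈ 𝓗, U ⊆ W₁ ∧ GHausBound G B (gProjSetOf G W₁ W₂) U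
  deep : ∀ W₁ ∈ 𝓗, ∀ W₂ ∈ 𝓗,
    GHausBound G B (gProjSetOf G W₁ W₂) W₁ → W₁ ⊆ W₂
  chains : ∀ (n : ℕ) (f : Fin (n + 1) → Set V), (∀ i, f i ∈ 𝓗) →
    (∀ i : Fin n, f i.castSucc ⊂ f i.succ) → n + 1 ≤ c
  rigid : ∀ W₁ ∈ 𝓗, ∀ W₂ ∈ 𝓗, (∃ d : ℝ, GHausBound G d W₁ W₂) → W₁ = W₂

/-- Proposition 3.12, bounded projections: either the projection
`π_F(W)` has uniformly bounded diameter in `F̂`, or `F ⊆ W`. -/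
theorem bounded_projections : ∀ (δ K : ℝ) (c : ℕ) (ξ B : ℝ), 0 < δ → ∃ Θ : ℝ,
    ∀ (V : Type u) (G : SimpleGraph V) (𝓗 : Set (Set V)),
      G.Connected → GraphHyperbolic G δ → FactorSystem G 𝓗 K c ξ B →
      ∀ F ∈ 𝓗, ∀ W ∈ 𝓗,
        (∀ u ∈ gProjSetOf G F W, ∀ v ∈ gProjSetOf G F W,
          ((hatG G 𝓗 F).dist u v : ℝ) ≤ Θ) ∨ F ⊆ W := by
  intro δ K c ξ B hδ
  refine ⟨max (K * ξ + K) (2 * (K * B + K) + 1), ?_⟩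
  intro V G 𝓗 hconn hhyp hFS F hF W hW
  have hFconn := hFS.connected F hF
  -- a graph hom from the induced subgraph on F into the cone-off of F
  let ι : G.induce F →g hatG G 𝓗 F :=
    ⟨Subtype.val, fun {a b} hab => ⟨a.2, b.2, Or.inl hab⟩⟩
  -- walks in the cone-off with controlled length
  have key : ∀ (u v : V) (hu : u ∈ F) (hv : v ∈ F),
      ∃ p : (hatG G 𝓗 F).Walk u v, (p.length : ℝ) ≤ K * (G.dist u v : ℝ) + K := by
    intro u v hu hv
    have hd := hFS.qie F hF u v hu hv
    obtain ⟨p, hp⟩ := (hFconn ⟨u, hu⟩ ⟨v, hv⟩).exists_walk_length_eq_dist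
    refine ⟨p.map ι, ?_⟩
    rw [SimpleGraph.Walk.length_map, hp]
    exact hd
  have hK : (0 : ℝ) ≤ K := by
    obtain ⟨x⟩ := hFconn.nonempty
    have := hFS.qie F hF x.1 x.1 x.2 x.2
    simpa [SimpleGraph.dist_self] using this
  have memF : ∀ u ∈ gProjSetOf G F W, u ∈ F := by
    intro u hu
    simp only [gProjSetOf, Set.mem_iUnion] at hu
    obtain ⟨s, -, hus, -⟩ := hu
    exact hus
  rcases hFS.proj F hF W hW with h | ⟨U, hU, hUF, hHaus⟩
  · left
    intro u hu v hv
    obtain ⟨p, hp⟩ := key u v (memF u hu) (memF v hv)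
    have hle : ((hatG G 𝓗 F).dist u v : ℝ) ≤ (p.length : ℝ) := by
      exact_mod_cast SimpleGraph.dist_le p
    have hx : K * (G.dist u v : ℝ) ≤ K * ξ :=
      mul_le_mul_of_nonneg_left (h u hu v hv) hK
    calc ((hatG G 𝓗 F).dist u v : ℝ) ≤ K * (G.dist u v : ℝ) + K := hle.trans hp
      _ ≤ K * ξ + K := by linarith
      _ ≤ max (K * ξ + K) (2 * (K * B + K) + 1) := le_max_left _ _
  · by_cases hUeq : U = F
    · right
      exact hFS.deep F hF W hW (hUeq ▸ hHaus)
    · left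
      have hUF' : U ⊂ F := ⟨hUF, fun h => hUeq (le_antisymm hUF h)⟩
      intro u hu v hv
      obtain ⟨a, haU, hda⟩ := hHaus.1 u hu
      obtain ⟨b, hbU, hdb⟩ := hHaus.1 v hv
      obtain ⟨p, hp⟩ := key u a (memF u hu) (hUF haU)
      obtain ⟨q, hq⟩ := key b v (hUF hbU) (memF v hv)
      -- a walk from a to b of length ≤ 1 using the cone edge
      have hab : ∃ r : (hatG G 𝓗 F).Walk a b, (r.length : ℝ) ≤ 1 := by
        by_cases hne : a = b
        · subst hne; exact ⟨SimpleGraph.Walk.nil, by simp⟩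
        · have hadj : (hatG G 𝓗 F).Adj a b :=
            ⟨hUF haU, hUF hbU, Or.inr ⟨hne, U, hU, hUF', haU, hbU⟩⟩
          exact ⟨SimpleGraph.Walk.cons hadj SimpleGraph.Walk.nil, by simp⟩
      obtain ⟨r, hr⟩ := hab
      have hle : ((hatG G 𝓗 F).dist u v : ℝ) ≤ ((p.append r).append q).length := by
        exact_mod_cast SimpleGraph.dist_le ((p.append r).append q)
      have hlen : (((p.append r).append q).length : ℝ)
          = (p.length : ℝ) + (r.length : ℝ) + (q.length : ℝ) := by
        simp [SimpleGraph.Walk.length_append]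
      have h1 : K * (G.dist u a : ℝ) ≤ K * B := mul_le_mul_of_nonneg_left hda hK
      have h2 : K * (G.dist b v : ℝ) ≤ K * B := by
        have : (G.dist b v : ℝ) ≤ B := by rwa [SimpleGraph.dist_comm]
        exact mul_le_mul_of_nonneg_left this hK
      have : ((hatG G 𝓗 F).dist u v : ℝ) ≤ 2 * (K * B + K) + 1 := by
        rw [hlen] at hle
        nlinarith [hp, hq, hr]
      exact this.trans (le_max_right _ _)
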